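/- arXiv:2102.07893 — 6 statements merged into one kernel-verified Lean document; each statement's English description precedes it below -/
import Mathlib

section
/- Let G be a finite group generated by elements x and y. If the order of x is 3 and the order of y is at least 4, then the Cayley digraph Cay(G,{x,y}) is an oriented regular representation of G, unless the order of y is 6, x = y⁴, and G is cyclic of order 6. -/
/-- `σ` is an automorphism of the Cayley digraph `Cay(G,S)`:
a permutation of `G` such that `(u,v)` is an arc iff `(σ u, σ v)` is an arc,
where `(u,v)` is an arc iff `v * u⁻¹ ∈ S`. -/
def IsCayleyDigraphAut {G : Type*} [Group G] (S : Set G) (σ : Equiv.Perm G) : Prop :=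
  ∀ u v : G, v * u⁻¹ ∈ S ↔ σ v * (σ u)⁻¹ ∈ S

/-- `Cay(G,S)` is a digraphical regular representation: every automorphism of the
Cayley digraph is right multiplication by an element of `G`. -/
def IsDRR {G : Type*} [Group G] (S : Set G) : Prop :=
  ∀ σ : Equiv.Perm G, IsCayleyDigraphAut S σ → ∃ g : G, ∀ u : G, σ u = u * g

/-- `Cay(G,S)` is an oriented regular representation: a proper DRR. -/
def IsORR {G : Type*} [Group G] (S : Set G) : Prop :=
  S ∩ S⁻¹ = ∅ ∧ IsDRR S

theorem stmt_3 (G : Type*) [Group G] [Finite G] (x y : G)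
    (hgen : Subgroup.closure {x, y} = ⊤)
    (hx : orderOf x = 3) (hy : 4 ≤ orderOf y)
    (hexc : ¬ (orderOf y = 6 ∧ x = y ^ 4 ∧ IsCyclic G ∧ Nat.card G = 6)) :
    IsORR ({x, y} : Set G) := by
  -- Basic consequences of the order hypotheses
  have hx3p : x ^ 3 = 1 := by rw [← hx]; exact pow_orderOf_eq_one x
  have hx3 : x * x * x = 1 := by
    have := hx3p
    rw [pow_succ, pow_two] at this
    exact this
  have hxx : x * x = x⁻¹ := eq_inv_of_mul_eq_one_left hx3
  have hyx : y ≠ x := by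
    intro h
    rw [h, hx] at hy
    omega
  -- The exceptional configuration is excluded
  have hE : x = (y * y)⁻¹ → False := by
    intro h
    have h1 : x ^ 3 = 1 := hx3p
    rw [h] at h1
    have h2 : (y * y) ^ 3 = 1 := by rwa [inv_pow, inv_eq_one] at h1
    have hy6 : y ^ 6 = 1 := by
      calc y ^ 6 = (y ^ 2) ^ 3 := by rw [← pow_mul]
        _ = (y * y) ^ 3 := by rw [pow_two]
        _ = 1 := h2
    have hdvd : orderOf y ∣ 6 := orderOf_dvd_of_pow_eq_one hy6
    have hle : orderOf y ≤ 6 := Nat.le_of_dvd (by norm_num) hdvd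
    have h6 : orderOf y = 6 := by
      have hcases : orderOf y = 4 ∨ orderOf y = 5 ∨ orderOf y = 6 := by omega
      rcases hcases with h' | h' | h'
      · rw [h'] at hdvd; norm_num at hdvd
      · rw [h'] at hdvd; norm_num at hdvd
      · exact h'
    have hx4 : x = y ^ 4 := by
      rw [h]
      have hmul : y ^ 2 * y ^ 4 = 1 := by rw [← pow_add]; exact hy6
      rw [show y * y = y ^ 2 from (pow_two y).symm]
      exact (eq_inv_of_mul_eq_one_right hmul).symm
    have hle2 : Subgroup.closure {x, y} ≤ Subgroup.zpowers y := by
      rw [Subgroup.closure_le]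
      intro a ha
      rcases ha with ha | ha
      · rw [ha, hx4]
        exact SetLike.mem_coe.mpr (Subgroup.pow_mem _ (Subgroup.mem_zpowers y) 4)
      · rw [ha]
        exact SetLike.mem_coe.mpr (Subgroup.mem_zpowers y)
    have htop : Subgroup.zpowers y = ⊤ := eq_top_iff.mpr (hgen ▸ hle2)
    have hcyc : IsCyclic G := ⟨⟨y, fun a => by
      have ha : a ∈ Subgroup.zpowers y := by rw [htop]; exact Subgroup.mem_top a
      exact ha⟩⟩
    have hcard : Nat.card G = 6 := by
      calc Nat.card G = Nat.card (⊤ : Subgroup G) := Subgroup.card_top.symm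
        _ = Nat.card (Subgroup.zpowers y) := by rw [htop]
        _ = orderOf y := Nat.card_zpowers y
        _ = 6 := h6
    exact hexc ⟨h6, hx4, hcyc, hcard⟩
  -- The seven impossible relations
  have L1 : y * x * x = 1 → False := fun h =>
    hyx (mul_right_cancel (mul_right_cancel (h.trans hx3.symm)))
  have L2 : x * y * x = 1 → False := fun h =>
    hyx (mul_left_cancel (mul_right_cancel (h.trans hx3.symm)))
  have L3 : x * x * y = 1 → False := fun h =>
    hyx (mul_left_cancel (h.trans hx3.symm))
  have L4 : y * y * x = 1 → False := fun h => hE (eq_inv_of_mul_eq_one_right h)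
  have L6 : x * y * y = 1 → False := by
    intro h
    rw [mul_assoc] at h
    exact hE (eq_inv_of_mul_eq_one_left h)
  have L5 : y * x * y = 1 → False := by
    intro h
    have h1 : y * x = y⁻¹ := eq_inv_of_mul_eq_one_left h
    apply hE
    have h2 : y * x = y * (y * y)⁻¹ := by
      rw [h1, mul_inv_rev, ← mul_assoc, mul_inv_cancel, one_mul]
    exact mul_left_cancel h2
  have L7 : y * y * y = 1 → False := by
    intro h
    have h3 : y ^ 3 = 1 := by rw [pow_succ, pow_two]; exact h
    have := Nat.le_of_dvd (by norm_num) (orderOf_dvd_of_pow_eq_one h3)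
    omega
  -- inverse of an automorphism is an automorphism
  have hinv : ∀ σ : Equiv.Perm G, IsCayleyDigraphAut ({x, y} : Set G) σ →
      IsCayleyDigraphAut ({x, y} : Set G) σ⁻¹ := by
    intro σ h u v
    have := h (σ⁻¹ u) (σ⁻¹ v)
    simpa using this.symm
  -- every automorphism commutes with left multiplication by x
  have hA1 : ∀ σ : Equiv.Perm G, IsCayleyDigraphAut ({x, y} : Set G) σ →
      ∀ u, σ (x * u) = x * σ u := by
    intro σ haut u
    have a1 : σ (x * u) * (σ u)⁻¹ ∈ ({x, y} : Set G) := (haut u (x * u)).mp (by simp)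
    have a2 : σ (x * (x * u)) * (σ (x * u))⁻¹ ∈ ({x, y} : Set G) :=
      (haut (x * u) (x * (x * u))).mp (by simp [mul_assoc])
    have key : x * (x * u) = x⁻¹ * u := by rw [← mul_assoc, hxx]
    have a3 : σ u * (σ (x * (x * u)))⁻¹ ∈ ({x, y} : Set G) :=
      (haut (x * (x * u)) u).mp (by rw [key]; simp [mul_assoc])
    have hprod : (σ u * (σ (x * (x * u)))⁻¹) * (σ (x * (x * u)) * (σ (x * u))⁻¹) *
        (σ (x * u) * (σ u)⁻¹) = 1 := by group
    simp only [Set.mem_insert_iff, Set.mem_singleton_iff] at a1 a2 a3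
    rcases a1 with h1 | h1
    · exact mul_inv_eq_iff_eq_mul.mp h1
    · exfalso
      rcases a2 with h2 | h2 <;> rcases a3 with h3 | h3
      · rw [h1, h2, h3] at hprod; exact L3 hprod
      · rw [h1, h2, h3] at hprod; exact L5 hprod
      · rw [h1, h2, h3] at hprod; exact L6 hprod
      · rw [h1, h2, h3] at hprod; exact L7 hprod
  -- every automorphism commutes with left multiplication by y
  have hA2 : ∀ σ : Equiv.Perm G, IsCayleyDigraphAut ({x, y} : Set G) σ →
      ∀ u, σ (y * u) = y * σ u := by
    intro σ haut u
    have a1 : σ (y * u) * (σ u)⁻¹ ∈ ({x, y} : Set G) := (haut u (y * u)).mp (by simp)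
    simp only [Set.mem_insert_iff, Set.mem_singleton_iff] at a1
    rcases a1 with h1 | h1
    · exfalso
      have h1' : σ (y * u) = x * σ u := mul_inv_eq_iff_eq_mul.mp h1
      have hautτ := hinv σ haut
      have hu : σ⁻¹ (σ u) = u := Equiv.symm_apply_apply σ u
      have ht : σ⁻¹ (x * σ u) = y * u := by
        rw [← h1']; exact Equiv.symm_apply_apply σ _
      have keyv : x * (x * σ u) = x⁻¹ * σ u := by rw [← mul_assoc, hxx]
      have b2 : σ⁻¹ (x * (x * σ u)) * (σ⁻¹ (x * σ u))⁻¹ ∈ ({x, y} : Set G) :=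
        (hautτ (x * σ u) (x * (x * σ u))).mp (by simp [mul_assoc])
      have b3 : σ⁻¹ (σ u) * (σ⁻¹ (x * (x * σ u)))⁻¹ ∈ ({x, y} : Set G) :=
        (hautτ (x * (x * σ u)) (σ u)).mp (by rw [keyv]; simp [mul_assoc])
      rw [ht] at b2
      rw [hu] at b3
      have hprod : (u * (σ⁻¹ (x * (x * σ u)))⁻¹) * (σ⁻¹ (x * (x * σ u)) * (y * u)⁻¹) * y
          = 1 := by group
      simp only [Set.mem_insert_iff, Set.mem_singleton_iff] at b2 b3
      rcases b2 with h2 | h2 <;> rcases b3 with h3 | h3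
      · rw [h2, h3] at hprod; exact L3 hprod
      · rw [h2, h3] at hprod; exact L5 hprod
      · rw [h2, h3] at hprod; exact L6 hprod
      · rw [h2, h3] at hprod; exact L7 hprod
    · exact mul_inv_eq_iff_eq_mul.mp h1
  constructor
  · -- properness
    rw [Set.eq_empty_iff_forall_notMem]
    rintro a ⟨h1, h2⟩
    rw [Set.mem_inv] at h2
    simp only [Set.mem_insert_iff, Set.mem_singleton_iff] at h1 h2
    rcases h1 with h1 | h1 <;> rcases h2 with h2 | h2 <;> rw [h1] at h2
    · have hm : x * x = 1 := inv_eq_iff_mul_eq_one.mp h2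
      have h2' : x ^ 2 = 1 := by rw [pow_two]; exact hm
      have hd := orderOf_dvd_of_pow_eq_one h2'
      rw [hx] at hd
      norm_num at hd
    · rw [← h2, orderOf_inv, hx] at hy
      omega
    · have : orderOf y = 3 := by rw [← hx, ← h2, orderOf_inv]
      omega
    · have hm : y * y = 1 := inv_eq_iff_mul_eq_one.mp h2
      have h2' : y ^ 2 = 1 := by rw [pow_two]; exact hm
      have := Nat.le_of_dvd (by norm_num) (orderOf_dvd_of_pow_eq_one h2')
      omega
  · -- DRR property
    intro σ haut
    refine ⟨σ 1, fun u => ?_⟩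
    let H : Subgroup G :=
      { carrier := {h | ∀ v, σ (h * v) = h * σ v}
        one_mem' := fun v => by rw [one_mul, one_mul]
        mul_mem' := by
          intro a b ha hb v
          rw [mul_assoc, ha, hb, ← mul_assoc]
        inv_mem' := by
          intro a ha v
          have h := ha (a⁻¹ * v)
          rw [← mul_assoc, mul_inv_cancel, one_mul] at h
          exact eq_inv_mul_iff_mul_eq.mpr h.symm }
    have hle : Subgroup.closure {x, y} ≤ H := by
      rw [Subgroup.closure_le]
      intro a ha
      rcases ha with ha | ha
      · rw [ha]; exact hA1 σ haut
      · rw [ha]; exact hA2 σ haut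
    have hu : u ∈ H := hle (hgen ▸ Subgroup.mem_top u)
    have := hu 1
    rwa [mul_one] at this
end

section
/- Let G be a finite group generated by elements x and y. If the order of x is 4, the order of y is at least 5, and the order of x·y is at least 3, then the Cayley digraph Cay(G,{x,y}) is an oriented regular representation of G, unless the order of y is 12, x = y⁹, and G is cyclic of order 12. -/
theorem stmt_4 (G : Type*) [Group G] [Finite G] (x y : G)
    (hgen : Subgroup.closure {x, y} = ⊤)
    (hx : orderOf x = 4) (hy : 5 ≤ orderOf y) (hxy : 3 ≤ orderOf (x * y))
    (hexc : ¬ (orderOf y = 12 ∧ x = y ^ 9 ∧ IsCyclic G ∧ Nat.card G = 12)) :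
    IsORR ({x, y} : Set G) := by
  have hx4 : x ^ 4 = 1 := by rw [← hx]; exact pow_orderOf_eq_one x
  have hx4' : x * x * x * x = 1 := by
    rw [← hx4, pow_succ, pow_succ, pow_succ, pow_one]
  have hy4 : y ^ 4 ≠ 1 := by
    intro h
    have := Nat.le_of_dvd (by norm_num) (orderOf_dvd_of_pow_eq_one h)
    omega
  -- the four forbidden length-4 words
  have hW1 : x * x * x * y = 1 → False := by
    intro h
    have hyx : y = x := mul_left_cancel (a := x * x * x) (h.trans hx4'.symm)
    rw [hyx, hx] at hy; omega
  have hW2 : x * x * y * y = 1 → False := by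
    intro h
    apply hy4
    have h' : (x * x) * (y * y) = 1 := by rw [← h]; group
    have h2 : y * y = (x * x)⁻¹ := eq_inv_of_mul_eq_one_right h'
    calc y ^ 4 = (y * y) * (y * y) := by
          rw [pow_succ, pow_succ, pow_succ, pow_one, mul_assoc]
      _ = (x * x)⁻¹ * (x * x)⁻¹ := by rw [h2]
      _ = (x * x * x * x)⁻¹ := by group
      _ = 1 := by rw [hx4', inv_one]
  have hW3 : x * y * x * y = 1 → False := by
    intro h
    have h2 : (x * y) ^ 2 = 1 := by
      calc (x * y) ^ 2 = x * y * x * y := by rw [sq, ← mul_assoc]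
        _ = 1 := h
    have := Nat.le_of_dvd (by norm_num) (orderOf_dvd_of_pow_eq_one h2)
    omega
  have hW5 : y * y * y * y = 1 → False := by
    intro h
    apply hy4
    calc y ^ 4 = y * y * y * y := by rw [pow_succ, pow_succ, pow_succ, pow_one]
      _ = 1 := h
  have hW4 : x * y * y * y = 1 → False := by
    intro h
    have h' : x * y ^ 3 = 1 := by
      rw [← h, pow_succ, pow_succ, pow_one, ← mul_assoc, ← mul_assoc]
    have hxy3 : x = (y ^ 3)⁻¹ := eq_inv_of_mul_eq_one_left h'
    have h4 : orderOf (y ^ 3) = 4 := by rw [← orderOf_inv, ← hxy3, hx]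
    rw [orderOf_pow] at h4
    have hg := (Nat.Prime.eq_one_or_self_of_dvd (by norm_num) _
      (Nat.gcd_dvd_right (orderOf y) 3))
    have hgl := Nat.gcd_dvd_left (orderOf y) 3
    have hn : orderOf y = 12 := by
      rcases hg with h1 | h3
      · rw [h1] at h4; omega
      · rw [h3] at h4 hgl; omega
    have hy12 : y ^ 12 = 1 := by rw [← hn]; exact pow_orderOf_eq_one y
    have h93 : y ^ 9 * y ^ 3 = 1 := by rw [← pow_add]; exact hy12
    have hx9 : x = y ^ 9 := by
      rw [hxy3]
      exact (eq_inv_of_mul_eq_one_left h93).symm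
    have hzp : Subgroup.zpowers y = ⊤ := by
      rw [← top_le_iff, ← hgen]
      refine (Subgroup.closure_le _).2 ?_
      intro g hg
      simp only [Set.mem_insert_iff, Set.mem_singleton_iff] at hg
      rcases hg with h | h
      · rw [h, hx9]; exact pow_mem (Subgroup.mem_zpowers y) 9
      · rw [h]; exact Subgroup.mem_zpowers y
    have hmemz : ∀ g : G, g ∈ Subgroup.zpowers y := fun g => by
      rw [hzp]; exact Subgroup.mem_top g
    have hcyc : IsCyclic G := ⟨⟨y, hmemz⟩⟩
    have hcard : Nat.card G = 12 := by
      have h1 := Nat.card_zpowers y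
      rw [hzp, Subgroup.card_top] at h1
      rw [h1, hn]
    exact hexc ⟨hn, hx9, hcyc, hcard⟩
  have hrot : ∀ a b c d : G, a * b * c * d = 1 → b * c * d * a = 1 := by
    intro a b c d h
    have h2 : b * c * d * a = a⁻¹ * (a * b * c * d) * a := by group
    rw [h2, h]; group
  have hrel : ∀ a b c d : G, a ∈ ({x, y} : Set G) → b ∈ ({x, y} : Set G) →
      c ∈ ({x, y} : Set G) → d ∈ ({x, y} : Set G) → a * b * c * d = 1 →
      a = x ∧ b = x ∧ c = x ∧ d = x := by
    intro a b c d ha hb hc hd h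
    simp only [Set.mem_insert_iff, Set.mem_singleton_iff] at ha hb hc hd
    rcases ha with rfl | rfl <;> rcases hb with rfl | rfl <;>
      rcases hc with rfl | rfl <;> rcases hd with rfl | rfl
    · exact ⟨rfl, rfl, rfl, rfl⟩
    · exact (hW1 h).elim
    · exact (hW1 (hrot _ _ _ _ (hrot _ _ _ _ (hrot _ _ _ _ h)))).elim
    · exact (hW2 h).elim
    · exact (hW1 (hrot _ _ _ _ (hrot _ _ _ _ h))).elim
    · exact (hW3 h).elim
    · exact (hW2 (hrot _ _ _ _ (hrot _ _ _ _ (hrot _ _ _ _ h)))).elim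
    · exact (hW4 h).elim
    · exact (hW1 (hrot _ _ _ _ h)).elim
    · exact (hW2 (hrot _ _ _ _ h)).elim
    · exact (hW3 (hrot _ _ _ _ h)).elim
    · exact (hW4 (hrot _ _ _ _ h)).elim
    · exact (hW2 (hrot _ _ _ _ (hrot _ _ _ _ h))).elim
    · exact (hW4 (hrot _ _ _ _ (hrot _ _ _ _ h))).elim
    · exact (hW4 (hrot _ _ _ _ (hrot _ _ _ _ (hrot _ _ _ _ h)))).elim
    · exact (hW5 h).elim
  have hxmem : x ∈ ({x, y} : Set G) := Set.mem_insert _ _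
  have hymem : y ∈ ({x, y} : Set G) := Set.mem_insert_of_mem _ rfl
  constructor
  · -- properness
    ext g
    simp only [Set.mem_inter_iff, Set.mem_empty_iff_false, iff_false, Set.mem_inv,
      Set.mem_insert_iff, Set.mem_singleton_iff]
    rintro ⟨h1 | h1, h2 | h2⟩ <;> rw [h1] at h2
    · have h3 : x ^ 2 = 1 := by rw [sq]; exact mul_eq_one_iff_eq_inv.2 h2.symm
      have := Nat.le_of_dvd (by norm_num) (orderOf_dvd_of_pow_eq_one h3)
      omega
    · rw [← h2, orderOf_inv, hx] at hy; omega
    · rw [← h2, orderOf_inv] at hx; omega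
    · have h3 : y ^ 2 = 1 := by rw [sq]; exact mul_eq_one_iff_eq_inv.2 h2.symm
      have := Nat.le_of_dvd (by norm_num) (orderOf_dvd_of_pow_eq_one h3)
      omega
  · -- DRR
    intro σ hσ
    have stepA : ∀ u : G, σ (x * u) = x * σ u := by
      intro u
      set u1 := x * u with hu1
      set u2 := x * u1 with hu2
      set u3 := x * u2 with hu3
      have hu : x * u3 = u := by
        rw [hu3, hu2, hu1]
        calc x * (x * (x * (x * u))) = (x * x * x * x) * u := by group
          _ = u := by rw [hx4', one_mul]
      have a1 : σ u1 * (σ u)⁻¹ ∈ ({x, y} : Set G) :=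
        (hσ u u1).1 (by rw [hu1]; simpa using hxmem)
      have a2 : σ u2 * (σ u1)⁻¹ ∈ ({x, y} : Set G) :=
        (hσ u1 u2).1 (by rw [hu2]; simpa using hxmem)
      have a3 : σ u3 * (σ u2)⁻¹ ∈ ({x, y} : Set G) :=
        (hσ u2 u3).1 (by rw [hu3]; simpa using hxmem)
      have a4 : σ u * (σ u3)⁻¹ ∈ ({x, y} : Set G) :=
        (hσ u3 u).1 (by rw [← hu]; simpa using hxmem)
      have hprod : (σ u * (σ u3)⁻¹) * (σ u3 * (σ u2)⁻¹) * (σ u2 * (σ u1)⁻¹) *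
          (σ u1 * (σ u)⁻¹) = 1 := by group
      have hc := hrel _ _ _ _ a4 a3 a2 a1 hprod
      have h1 := hc.2.2.2
      rw [mul_inv_eq_iff_eq_mul] at h1
      exact h1
    have stepB : ∀ u : G, σ (y * u) = y * σ u := by
      intro u
      have a1 : σ (y * u) * (σ u)⁻¹ ∈ ({x, y} : Set G) :=
        (hσ u (y * u)).1 (by simpa using hymem)
      simp only [Set.mem_insert_iff, Set.mem_singleton_iff] at a1
      rcases a1 with h1 | h1
      · exfalso
        rw [mul_inv_eq_iff_eq_mul, ← stepA u] at h1
        have h2 : y * u = x * u := σ.injective h1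
        have hyx : y = x := mul_right_cancel h2
        rw [hyx, hx] at hy; omega
      · rw [mul_inv_eq_iff_eq_mul] at h1; exact h1
    have stepC : ∀ u ∈ Submonoid.closure ({x, y} : Set G), ∀ v : G,
        σ (u * v) = u * σ v := by
      intro u hu
      refine Submonoid.closure_induction ?_ ?_ ?_ hu
      · intro g hg
        simp only [Set.mem_insert_iff, Set.mem_singleton_iff] at hg
        rcases hg with rfl | rfl
        · exact stepA
        · exact stepB
      · intro v; rw [one_mul, one_mul]
      · intro a b ha hb iha ihb v
        rw [mul_assoc, iha, ihb, ← mul_assoc]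
    have hall : ∀ g : G, g ∈ Submonoid.closure ({x, y} : Set G) := by
      let H : Subgroup G :=
        { toSubmonoid := Submonoid.closure ({x, y} : Set G),
          inv_mem' := by
            intro a ha
            have hpos : 0 < orderOf a := orderOf_pos a
            have h1 : a * a ^ (orderOf a - 1) = 1 := by
              rw [← pow_succ', Nat.sub_add_cancel hpos]
              exact pow_orderOf_eq_one a
            have h2 : a⁻¹ = a ^ (orderOf a - 1) := inv_eq_of_mul_eq_one_right h1
            have ha' : a ∈ Submonoid.closure ({x, y} : Set G) := ha
            rw [h2]
            exact pow_mem ha' _ }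
      intro g
      have hH : H = ⊤ := by
        rw [← top_le_iff, ← hgen]
        refine (Subgroup.closure_le _).2 ?_
        intro g hg
        exact Submonoid.subset_closure hg
      have : g ∈ H := hH ▸ Subgroup.mem_top g
      exact this
    refine ⟨σ 1, fun u => ?_⟩
    have := stepC u (hall u) 1
    rwa [mul_one] at this
end

section
/- Let p ≥ 5 be a prime and let x, y be nonzero elements of the additive group ℤ/pℤ with x ≠ y and x ≠ −y. Then the Cayley digraph Cay(ℤ/pℤ, {x,y}) (with respect to the additive group structure) is an oriented regular representation of ℤ/pℤ. -/
/-- `σ` is an automorphism of the Cayley digraph `Cay(G,S)` of an additive group: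
a permutation of `G` such that `(u,v)` is an arc iff `(σ u, σ v)` is an arc,
where `(u,v)` is an arc iff `v - u ∈ S`. -/
def IsAddCayleyDigraphAut {G : Type*} [AddGroup G] (S : Set G) (σ : Equiv.Perm G) : Prop :=
  ∀ u v : G, v - u ∈ S ↔ σ v - σ u ∈ S

/-- `Cay(G,S)` is a digraphical regular representation: every automorphism of the
Cayley digraph is (right) translation by an element of `G`. -/
def IsAddDRR {G : Type*} [AddGroup G] (S : Set G) : Prop :=
  ∀ σ : Equiv.Perm G, IsAddCayleyDigraphAut S σ → ∃ g : G, ∀ u : G, σ u = u + g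

/-- `Cay(G,S)` is an oriented regular representation: a proper DRR. -/
def IsAddORR {G : Type*} [AddGroup G] (S : Set G) : Prop :=
  S ∩ (-S) = ∅ ∧ IsAddDRR S

theorem stmt_5 (p : ℕ) (hp : p.Prime) (hp5 : 5 ≤ p) (x y : ZMod p)
    (hx : x ≠ 0) (hy : y ≠ 0) (hxy : x ≠ y) (hxy' : x ≠ -y) :
    IsAddORR ({x, y} : Set (ZMod p)) := by
  haveI : Fact p.Prime := ⟨hp⟩
  have htwo : (2 : ZMod p) ≠ 0 := by
    have h : ((2 : ℕ) : ZMod p) = 0 ↔ p ∣ 2 := ZMod.natCast_eq_zero_iff 2 p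
    intro hc
    have : p ∣ 2 := h.mp (by exact_mod_cast hc)
    have := Nat.le_of_dvd (by norm_num) this
    omega
  have hhalf : ∀ a : ZMod p, a = -a → a = 0 := by
    intro a ha
    have h2a : (2 : ZMod p) * a = 0 := by linear_combination ha
    rcases mul_eq_zero.mp h2a with h | h
    · exact absurd h htwo
    · exact h
  constructor
  · rw [Set.eq_empty_iff_forall_notMem]
    rintro s ⟨hs1, hs2⟩
    rw [Set.mem_neg] at hs2
    simp only [Set.mem_insert_iff, Set.mem_singleton_iff] at hs1 hs2
    rcases hs1 with hs1 | hs1 <;> rcases hs2 with hs2 | hs2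
    · exact hx (hhalf x (by linear_combination -hs1 - hs2))
    · exact hxy' (by linear_combination -hs1 - hs2)
    · exact hxy' (by linear_combination -hs1 - hs2)
    · exact hy (hhalf y (by linear_combination -hs1 - hs2))
  · intro σ hσ
    have key : ∀ u : ZMod p, σ (u + (x + y)) = σ u + (x + y) := by
      intro u
      have hm1 : σ (u + x) - σ u ∈ ({x, y} : Set (ZMod p)) :=
        (hσ u (u + x)).mp (by simp)
      have hm2 : σ (u + y) - σ u ∈ ({x, y} : Set (ZMod p)) :=
        (hσ u (u + y)).mp (by simp)
      have hw1 : σ (u + (x + y)) - σ (u + x) ∈ ({x, y} : Set (ZMod p)) := by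
        refine (hσ (u + x) (u + (x + y))).mp ?_
        have : u + (x + y) - (u + x) = y := by ring
        rw [this]; simp
      have hw2 : σ (u + (x + y)) - σ (u + y) ∈ ({x, y} : Set (ZMod p)) := by
        refine (hσ (u + y) (u + (x + y))).mp ?_
        have : u + (x + y) - (u + y) = x := by ring
        rw [this]; simp
      have hne : σ (u + x) ≠ σ (u + y) := by
        intro h
        exact hxy (add_left_cancel (σ.injective h))
      simp only [Set.mem_insert_iff, Set.mem_singleton_iff] at hm1 hm2 hw1 hw2
      rcases hm1 with h1 | h1 <;> rcases hm2 with h2 | h2 <;>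
        rcases hw1 with h3 | h3 <;> rcases hw2 with h4 | h4 <;>
        first
        | linear_combination h1 + h3
        | linear_combination h2 + h4
        | exact absurd (show σ (u + x) = σ (u + y) by linear_combination h1 - h2) hne
        | exact absurd (show σ (u + x) = σ (u + y) by linear_combination h4 - h3) hne
        | exact absurd (show x = y by linear_combination h2 + h4 - h1 - h3) hxy
        | exact absurd (show x = y by linear_combination h1 + h3 - h2 - h4) hxy
        | exact absurd (mul_left_cancel₀ htwo
            (show (2 : ZMod p) * x = 2 * y by linear_combination h2 + h4 - h1 - h3)) hxy
        | exact absurd (mul_left_cancel₀ htwo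
            (show (2 : ZMod p) * x = 2 * y by linear_combination h1 + h3 - h2 - h4)) hxy
    have hz : x + y ≠ 0 := by
      intro h
      exact hxy' (by linear_combination h)
    have hiter : ∀ k : ℕ, σ (k • (x + y)) = σ 0 + k • (x + y) := by
      intro k
      induction k with
      | zero => simp
      | succ n ih =>
        rw [succ_nsmul, key, ih, add_assoc]
    refine ⟨σ 0, fun u => ?_⟩
    set k : ℕ := (u * (x + y)⁻¹).val with hk
    have hu : (k : ZMod p) * (x + y) = u := by
      rw [hk]
      rw [ZMod.natCast_val, ZMod.cast_id]
      field_simp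
    have := hiter k
    rw [nsmul_eq_mul, hu] at this
    rw [this, add_comm]
end

section
/- Let G be a group generated by two elements x and z such that the order of x is at most 3, the order of z is at most 3, and the order of x·z is at most 3. Then G is solvable. -/
open Subgroup

private lemma cyc_solv {G : Type*} [Group G] (g : G) (h : Subgroup.closure {g} = ⊤) :
    IsSolvable G := by
  apply isSolvable_of_comm
  intro a b
  have ha : a ∈ zpowers g := by rw [zpowers_eq_closure, h]; trivial
  have hb : b ∈ zpowers g := by rw [zpowers_eq_closure, h]; trivial
  obtain ⟨m, rfl⟩ := ha
  obtain ⟨n, rfl⟩ := hb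
  group

private lemma closure_comm {G : Type*} [Group G] {s : Set G}
    (h : ∀ a ∈ s, ∀ b ∈ s, a * b = b * a) :
    ∀ a ∈ closure s, ∀ b ∈ closure s, a * b = b * a := by
  have h1 : ∀ a ∈ s, ∀ b ∈ closure s, a * b = b * a := by
    intro a ha b hb
    have hle : closure s ≤ centralizer {a} := by
      rw [closure_le]
      intro c hc
      rw [SetLike.mem_coe, mem_centralizer_singleton_iff]
      exact (h a ha c hc).symm
    have := hle hb
    rw [mem_centralizer_singleton_iff] at this
    exact this.symm
  intro a ha b hb
  have hle : closure s ≤ centralizer {b} := by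
    rw [closure_le]
    intro c hc
    rw [SetLike.mem_coe, mem_centralizer_singleton_iff]
    exact h1 c hc b hb
  have := hle ha
  rwa [mem_centralizer_singleton_iff] at this

private lemma normal_gen {G : Type*} [Group G] (x z : G) (s : Set G)
    (hgen : Subgroup.closure {x, z} = ⊤)
    (hx1 : ∀ a ∈ s, x * a * x⁻¹ ∈ Subgroup.closure s)
    (hx2 : ∀ a ∈ s, x⁻¹ * a * x ∈ Subgroup.closure s)
    (hz1 : ∀ a ∈ s, z * a * z⁻¹ ∈ Subgroup.closure s)
    (hz2 : ∀ a ∈ s, z⁻¹ * a * z ∈ Subgroup.closure s) :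
    (Subgroup.closure s).Normal := by
  have key : ∀ g : G, (∀ a ∈ s, g * a * g⁻¹ ∈ closure s) →
      ∀ h ∈ closure s, g * h * g⁻¹ ∈ closure s := by
    intro g hg h hh
    have hle : (closure s).map (MulAut.conj g).toMonoidHom ≤ closure s := by
      rw [MonoidHom.map_closure, closure_le]
      rintro _ ⟨a, ha, rfl⟩
      simpa using hg a ha
    exact hle ⟨h, hh, by simp⟩
  have mem : ∀ g : G, (∀ a ∈ s, g * a * g⁻¹ ∈ closure s) →
      (∀ a ∈ s, g⁻¹ * a * g ∈ closure s) → g ∈ Subgroup.normalizer (closure s : Set G) := by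
    intro g h1 h2
    rw [Subgroup.mem_normalizer_iff]
    intro h
    constructor
    · exact fun hh => key g h1 h hh
    · intro hh
      have h2' : ∀ a ∈ s, g⁻¹ * a * (g⁻¹)⁻¹ ∈ closure s := by simpa using h2
      have := key g⁻¹ h2' _ hh
      simpa [mul_assoc] using this
  rw [← Subgroup.normalizer_eq_top_iff, eq_top_iff, ← hgen, closure_le]
  rintro g (rfl | rfl)
  exacts [mem g hx1 hx2, mem g hz1 hz2]

private lemma meta_solv {G : Type*} [Group G] (x z : G) (s : Set G)
    (hgen : Subgroup.closure {x, z} = ⊤)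
    [hN : (Subgroup.closure s).Normal]
    (hcomm : ∀ a ∈ s, ∀ b ∈ s, a * b = b * a)
    (hq : ((z : G ⧸ Subgroup.closure s)) ∈ Subgroup.closure {((x : G ⧸ Subgroup.closure s))}) :
    IsSolvable G := by
  set N := Subgroup.closure s with hNdef
  haveI hNsolv : IsSolvable N := isSolvable_of_comm (by
    rintro ⟨a, ha⟩ ⟨b, hb⟩
    exact Subtype.ext (closure_comm hcomm a ha b hb))
  haveI hQsolv : IsSolvable (G ⧸ N) := by
    apply cyc_solv ((x : G ⧸ N))
    have h1 : (Subgroup.closure {x, z}).map (QuotientGroup.mk' N) = ⊤ := by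
      rw [hgen]
      exact Subgroup.map_top_of_surjective _ (QuotientGroup.mk'_surjective N)
    rw [MonoidHom.map_closure] at h1
    have himg : (QuotientGroup.mk' N) '' {x, z} = {((x : G ⧸ N)), ((z : G ⧸ N))} := by
      simp [Set.image_insert_eq]
    rw [himg] at h1
    rw [eq_top_iff, ← h1, Subgroup.closure_le]
    rintro g (rfl | rfl)
    · exact subset_closure rfl
    · exact hq
  exact solvable_of_ker_le_range N.subtype (QuotientGroup.mk' N)
    (by rw [QuotientGroup.ker_mk', Subgroup.range_subtype]) (hG' := hNsolv) (hG'' := hQsolv)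

private lemma D_solv {G : Type*} [Group G] (x z : G)
    (hgen : Subgroup.closure {x, z} = ⊤)
    (hx : x ^ 2 = 1) (hxz : (x * z) ^ 2 = 1) : IsSolvable G := by
  have hx1 : x * x = 1 := by simpa [pow_two] using hx
  have hxi : x⁻¹ = x := inv_eq_of_mul_eq_one_right hx1
  have hxz1 : x * (z * (x * z)) = 1 := by simpa [pow_two, mul_assoc] using hxz
  have key : x * z * x⁻¹ = z⁻¹ := by
    rw [hxi, eq_inv_iff_mul_eq_one]
    simpa [mul_assoc] using hxz1
  have hzmem : z ∈ Subgroup.closure ({z} : Set G) := Subgroup.subset_closure rfl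
  haveI hN : (Subgroup.closure ({z} : Set G)).Normal := by
    apply normal_gen x z _ hgen
    · rintro a rfl
      rw [key]; exact inv_mem hzmem
    · rintro a rfl
      have key2 : x * a * x = a⁻¹ := by rw [← key, hxi]
      rw [hxi, key2]; exact inv_mem hzmem
    · rintro a rfl
      simpa using hzmem
    · rintro a rfl
      simpa using hzmem
  apply meta_solv x z {z} hgen
  · rintro a rfl b rfl; rfl
  · have h1 : ((z : G ⧸ Subgroup.closure ({z} : Set G))) = 1 :=
      (QuotientGroup.eq_one_iff z).mpr hzmem
    rw [h1]; exact one_mem _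

private lemma A_solv {G : Type*} [Group G] (x z : G)
    (hgen : Subgroup.closure {x, z} = ⊤)
    (hx : x ^ 2 = 1) (hz : z ^ 3 = 1) (hxz : (x * z) ^ 3 = 1) : IsSolvable G := by
  have hx1 : x * x = 1 := by simpa [pow_two] using hx
  have hxi : x⁻¹ = x := inv_eq_of_mul_eq_one_right hx1
  have hxw : ∀ w : G, x * (x * w) = w := fun w => by rw [← mul_assoc, hx1, one_mul]
  have hz1 : z * (z * z) = 1 := by simpa [pow_succ, pow_two, mul_assoc] using hz
  have hzi : z⁻¹ = z * z := inv_eq_of_mul_eq_one_right hz1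
  have hzw : ∀ w : G, z * (z * (z * w)) = w := fun w => by
    rw [show z * (z * (z * w)) = (z * (z * z)) * w by simp [mul_assoc], hz1, one_mul]
  have hxz1 : x * (z * (x * (z * (x * z)))) = 1 := by
    simpa [pow_succ, pow_two, mul_assoc] using hxz
  have hzi1 : z⁻¹ * (z⁻¹ * z⁻¹) = 1 := by
    rw [hzi]; simp only [mul_assoc, hzw]; exact hz1
  have hziw : ∀ w : G, z⁻¹ * (z⁻¹ * (z⁻¹ * w)) = w := fun w => by
    rw [show z⁻¹ * (z⁻¹ * (z⁻¹ * w)) = (z⁻¹ * (z⁻¹ * z⁻¹)) * w by simp [mul_assoc], hzi1,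
      one_mul]
  have e1 : x * (z * x) = (z * (x * z))⁻¹ := by
    apply eq_inv_of_mul_eq_one_left
    simpa [mul_assoc] using hxz1
  have e1w : ∀ w : G, x * (z * (x * w)) = z⁻¹ * (x * (z⁻¹ * w)) := fun w => by
    have h := congrArg (· * w) e1
    simp only [mul_assoc] at h
    rw [h]; simp [mul_inv_rev, hxi, mul_assoc]
  set q : G := z * x * z⁻¹ with hqdef
  have hq2 : q * q = 1 := by
    rw [hqdef]; simp only [mul_assoc, inv_mul_cancel_left]
    simp only [hxw, mul_inv_cancel]
  have hqi : q⁻¹ = q := inv_eq_of_mul_eq_one_right hq2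
  have hc2 : (x * q) * (x * q) = 1 := by
    rw [hqdef]; simp only [mul_assoc]
    simp only [e1w]
    simp only [hziw, hxw]
    exact hzi1
  have hcomm : x * q = q * x := by
    have h3 : x * q = (x * q)⁻¹ := eq_inv_of_mul_eq_one_left hc2
    rwa [mul_inv_rev, hqi, hxi] at h3
  -- membership set
  set s : Set G := {x, q} with hsdef
  have hxmem : x ∈ Subgroup.closure s := Subgroup.subset_closure (Set.mem_insert _ _)
  have hqmem : q ∈ Subgroup.closure s := Subgroup.subset_closure (Set.mem_insert_of_mem _ rfl)
  have hT3 : z * q * z⁻¹ = (x * q)⁻¹ := by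
    apply eq_inv_of_mul_eq_one_right
    rw [hqdef]
    simp only [mul_assoc, inv_mul_cancel_left]
    simp only [e1w]
    simp only [mul_inv_cancel_left, hxw]
    exact hzi1
  have hT4 : z⁻¹ * x * z = (x * q)⁻¹ := by
    apply eq_inv_of_mul_eq_one_right
    rw [hqdef]
    simp only [mul_assoc, hzi]
    simp only [hzw]
    exact hxz1
  have hT5 : z⁻¹ * q * z = x := by
    rw [hqdef]; simp [mul_assoc]
  haveI hN : (Subgroup.closure s).Normal := by
    apply normal_gen z x s (by rwa [Set.pair_comm])
    · rintro a (rfl | rfl)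
      · exact hqmem
      · rw [hT3]; exact inv_mem (mul_mem hxmem hqmem)
    · rintro a (rfl | rfl)
      · rw [hT4]; exact inv_mem (mul_mem hxmem hqmem)
      · rw [hT5]; exact hxmem
    · rintro a (rfl | rfl)
      · simpa [mul_inv_cancel_right] using hxmem
      · rw [hcomm, mul_inv_cancel_right]; exact hqmem
    · rintro a (rfl | rfl)
      · simpa using hxmem
      · rw [hxi, hcomm, mul_assoc, hx1, mul_one]
        exact hqmem
  apply meta_solv z x s (by rwa [Set.pair_comm])
  · rintro a (rfl | rfl) b (rfl | rfl)
    · rfl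
    · exact hcomm
    · exact hcomm.symm
    · rfl
  · have h1 : ((x : G ⧸ Subgroup.closure s)) = 1 := (QuotientGroup.eq_one_iff x).mpr hxmem
    rw [h1]; exact one_mem _

private lemma E_solv {G : Type*} [Group G] (x z : G)
    (hgen : Subgroup.closure {x, z} = ⊤)
    (hx : x ^ 3 = 1) (hz : z ^ 3 = 1) (hxz : (x * z) ^ 3 = 1) : IsSolvable G := by
  have hx1 : x * (x * x) = 1 := by simpa [pow_succ, pow_two, mul_assoc] using hx
  have hxi : x⁻¹ = x * x := inv_eq_of_mul_eq_one_right hx1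
  have hxw : ∀ w : G, x * (x * (x * w)) = w := fun w => by
    rw [show x * (x * (x * w)) = (x * (x * x)) * w by simp [mul_assoc], hx1, one_mul]
  have hz1 : z * (z * z) = 1 := by simpa [pow_succ, pow_two, mul_assoc] using hz
  have hzi : z⁻¹ = z * z := inv_eq_of_mul_eq_one_right hz1
  have hzw : ∀ w : G, z * (z * (z * w)) = w := fun w => by
    rw [show z * (z * (z * w)) = (z * (z * z)) * w by simp [mul_assoc], hz1, one_mul]
  have hxz1 : x * (z * (x * (z * (x * z)))) = 1 := by
    simpa [pow_succ, pow_two, mul_assoc] using hxz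
  have hzx1 : z * (x * (z * (x * (z * x)))) = 1 := by
    have h : x * (z * (x * (z * (x * (z * x))))) = x := by
      rw [show x * (z * (x * (z * (x * (z * x))))) = (x * (z * (x * (z * (x * z))))) * x by
        simp [mul_assoc], hxz1, one_mul]
    exact mul_left_cancel (a := x) (by rw [h, mul_one])
  set u : G := x⁻¹ * z with hudef
  set v : G := z * x⁻¹ with hvdef
  have h5 : (z * (x * z)) * (x * (z * x)) = 1 := by simpa [mul_assoc] using hzx1
  have hcomm : u * v = v * u := by
    rw [hudef, hvdef]
    calc x⁻¹ * z * (z * x⁻¹) = x * (x * (z * (z * (x * x)))) := by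
          rw [hxi]; simp [mul_assoc]
      _ = (x * (z * x))⁻¹ := by
          rw [show (x * (z * x))⁻¹ = x⁻¹ * (z⁻¹ * x⁻¹) by simp [mul_assoc], hxi, hzi]
          simp [mul_assoc]
      _ = z * (x * z) := (eq_inv_of_mul_eq_one_left h5).symm
      _ = z * x⁻¹ * (x⁻¹ * z) := by rw [hxi]; simp only [mul_assoc, hxw]
  set s : Set G := {u, v} with hsdef
  have humem : u ∈ Subgroup.closure s := Subgroup.subset_closure (Set.mem_insert _ _)
  have hvmem : v ∈ Subgroup.closure s := Subgroup.subset_closure (Set.mem_insert_of_mem _ rfl)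
  have hF1 : x * u * x⁻¹ = v := by rw [hudef, hvdef]; simp [mul_assoc]
  have hF2 : x * v * x⁻¹ = (u * v)⁻¹ := by
    apply eq_inv_of_mul_eq_one_right
    rw [hudef, hvdef, hxi]
    simp only [mul_assoc, hxw, hzw]
    exact hx1
  have hF3 : x⁻¹ * u * x = (u * v)⁻¹ := by
    apply eq_inv_of_mul_eq_one_right
    rw [hudef, hvdef, hxi]
    simp only [mul_assoc, hxw, hzw]
    exact hx1
  have hF4 : x⁻¹ * v * x = u := by rw [hudef, hvdef]; simp [mul_assoc]
  have hF5 : z * u * z⁻¹ = v := by rw [hudef, hvdef]; simp [mul_assoc]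
  have hF6 : z * v * z⁻¹ = (v * u)⁻¹ := by
    apply eq_inv_of_mul_eq_one_right
    rw [hudef, hvdef, hxi, hzi]
    simp only [mul_assoc, hxw, hzw]
    exact hz1
  have hF7 : z⁻¹ * u * z = (v * u)⁻¹ := by
    apply eq_inv_of_mul_eq_one_right
    rw [hudef, hvdef, hxi, hzi]
    simp only [mul_assoc, hxw, hzw]
    exact hz1
  have hF8 : z⁻¹ * v * z = u := by rw [hudef, hvdef]; simp [mul_assoc]
  haveI hN : (Subgroup.closure s).Normal := by
    apply normal_gen x z s hgen
    · rintro a (rfl | rfl)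
      · rw [hF1]; exact hvmem
      · rw [hF2]; exact inv_mem (mul_mem humem hvmem)
    · rintro a (rfl | rfl)
      · rw [hF3]; exact inv_mem (mul_mem humem hvmem)
      · rw [hF4]; exact humem
    · rintro a (rfl | rfl)
      · rw [hF5]; exact hvmem
      · rw [hF6]; exact inv_mem (mul_mem hvmem humem)
    · rintro a (rfl | rfl)
      · rw [hF7]; exact inv_mem (mul_mem hvmem humem)
      · rw [hF8]; exact humem
  apply meta_solv x z s hgen
  · rintro a (rfl | rfl) b (rfl | rfl)
    · rfl
    · exact hcomm
    · exact hcomm.symm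
    · rfl
  · have h1 : ((x : G ⧸ Subgroup.closure s)) = ((z : G ⧸ Subgroup.closure s)) :=
      QuotientGroup.eq.mpr humem
    rw [← h1]; exact Subgroup.subset_closure rfl

theorem stmt_7 (G : Type*) [Group G] (x z : G)
    (hgen : Subgroup.closure {x, z} = ⊤)
    (hx0 : 0 < orderOf x) (hx : orderOf x ≤ 3)
    (hz0 : 0 < orderOf z) (hz : orderOf z ≤ 3)
    (hxz0 : 0 < orderOf (x * z)) (hxz : orderOf (x * z) ≤ 3) :
    IsSolvable G := by
  have key : ∀ g : G, 0 < orderOf g → orderOf g ≤ 3 → g ^ 2 = 1 ∨ g ^ 3 = 1 := by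
    intro g h0 h3
    have h : orderOf g = 1 ∨ orderOf g = 2 ∨ orderOf g = 3 := by omega
    rcases h with h | h | h
    · left
      have hg : g = 1 := orderOf_eq_one_iff.mp h
      simp [hg]
    · left; rw [← h]; exact pow_orderOf_eq_one g
    · right; rw [← h]; exact pow_orderOf_eq_one g
  rcases key x hx0 hx with x2 | x3 <;> rcases key z hz0 hz with z2 | z3 <;>
    rcases key (x * z) hxz0 hxz with xz2 | xz3
  · exact D_solv x z hgen x2 xz2
  · -- x²=1, z²=1, (xz)³=1 : dihedral on (x, x*z)
    have hxm : x ∈ Subgroup.closure ({x, x * z} : Set G) :=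
      Subgroup.subset_closure (Set.mem_insert _ _)
    have hxzm : x * z ∈ Subgroup.closure ({x, x * z} : Set G) :=
      Subgroup.subset_closure (Set.mem_insert_of_mem _ rfl)
    have hgen' : Subgroup.closure {x, x * z} = ⊤ := by
      rw [eq_top_iff, ← hgen, Subgroup.closure_le]
      refine Set.insert_subset hxm (Set.singleton_subset_iff.mpr ?_)
      have : x⁻¹ * (x * z) ∈ Subgroup.closure ({x, x * z} : Set G) :=
        mul_mem (inv_mem hxm) hxzm
      simpa [mul_assoc] using this
    have hx1 : x * x = 1 := by simpa [pow_two] using x2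
    have h2 : (x * (x * z)) ^ 2 = 1 := by
      rw [show x * (x * z) = (x * x) * z by simp [mul_assoc], hx1, one_mul]
      exact z2
    exact D_solv x (x * z) hgen' x2 h2
  · exact D_solv x z hgen x2 xz2
  · exact A_solv x z hgen x2 z3 xz3
  · -- x³=1, z²=1, (xz)²=1 : dihedral on (z, x)
    have hgen' : Subgroup.closure {z, x} = ⊤ := by rwa [Set.pair_comm]
    have h2 : (z * x) ^ 2 = 1 := by
      have : (z * x) ^ 2 = z * ((x * z) ^ 2) * z⁻¹ := by simp [pow_two, mul_assoc]
      rw [this, xz2]; simp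
    exact D_solv z x hgen' z2 h2
  · -- x³=1, z²=1, (xz)³=1 : A4 on (z, x)
    have hgen' : Subgroup.closure {z, x} = ⊤ := by rwa [Set.pair_comm]
    have h3 : (z * x) ^ 3 = 1 := by
      have : (z * x) ^ 3 = z * ((x * z) ^ 3) * z⁻¹ := by
        simp [pow_succ, pow_two, mul_assoc]
      rw [this, xz3]; simp
    exact A_solv z x hgen' z2 x3 h3
  · -- x³=1, z³=1, (xz)²=1 : A4 on (x*z, z⁻¹)
    have hgen' : Subgroup.closure {x * z, z⁻¹} = ⊤ := by
      rw [eq_top_iff, ← hgen, Subgroup.closure_le]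
      have hxzm : x * z ∈ Subgroup.closure ({x * z, z⁻¹} : Set G) :=
        Subgroup.subset_closure (Set.mem_insert _ _)
      have hzim : z⁻¹ ∈ Subgroup.closure ({x * z, z⁻¹} : Set G) :=
        Subgroup.subset_closure (Set.mem_insert_of_mem _ rfl)
      refine Set.insert_subset ?_ (Set.singleton_subset_iff.mpr ?_)
      · have : (x * z) * z⁻¹ ∈ Subgroup.closure ({x * z, z⁻¹} : Set G) := mul_mem hxzm hzim
        simpa [mul_assoc] using this
      · simpa using inv_mem hzim
    have h3 : (z⁻¹) ^ 3 = 1 := by rw [inv_pow, z3, inv_one]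
    have h3' : ((x * z) * z⁻¹) ^ 3 = 1 := by rw [mul_inv_cancel_right]; exact x3
    exact A_solv (x * z) z⁻¹ hgen' xz2 h3 h3'
  · exact E_solv x z hgen x3 z3 xz3
end

section
/- Let G be a finite group generated by elements x and y, where x has order 2 and y has order at least 3. Then the Cayley digraph Cay(G,{x,y}) is a digraphical regular representation of G. -/
theorem stmt_9 (G : Type*) [Group G] [Finite G] (x y : G)
    (hgen : Subgroup.closure {x, y} = ⊤)
    (hx : orderOf x = 2) (hy : 3 ≤ orderOf y) :
    IsDRR ({x, y} : Set G) := by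
  intro σ hσ
  set S : Set G := {x, y} with hS
  -- basic facts
  have hx2 : x * x = 1 := by
    have := pow_orderOf_eq_one x
    rw [hx, pow_two] at this
    exact this
  have hxinv : x⁻¹ = x := inv_eq_of_mul_eq_one_right hx2
  have hyx : y⁻¹ ≠ x := by
    intro h
    have hyx' : y = x := by rw [← inv_inv y, h, hxinv]
    rw [hyx', hx] at hy
    omega
  have hyy : y⁻¹ ≠ y := by
    intro h
    have h2 : y ^ 2 = 1 := by rw [pow_two]; nth_rewrite 1 [← h]; rw [inv_mul_cancel]
    have := Nat.le_of_dvd (by norm_num) (orderOf_dvd_of_pow_eq_one h2)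
    omega
  have hyS : y⁻¹ ∉ S := by
    intro h
    rcases h with h | h
    · exact hyx h
    · exact hyy h
  -- color preservation for x
  have step_x : ∀ u : G, σ (x * u) = x * σ u := by
    intro u
    have h1 : (x * u) * u⁻¹ ∈ S := by
      rw [mul_inv_cancel_right]; exact Set.mem_insert x {y}
    have h1' : σ (x * u) * (σ u)⁻¹ ∈ S := (hσ u (x * u)).mp h1
    have h2 : u * (x * u)⁻¹ ∈ S := by
      rw [mul_inv_rev, ← mul_assoc, mul_inv_cancel, one_mul, hxinv]
      exact Set.mem_insert x {y}
    have h2' : σ u * (σ (x * u))⁻¹ ∈ S := (hσ (x * u) u).mp h2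
    rcases h1' with h | h
    · rw [mul_inv_eq_iff_eq_mul] at h; exact h
    · exfalso
      apply hyS
      have : (σ (x * u) * (σ u)⁻¹)⁻¹ ∈ S := by
        rw [mul_inv_rev, inv_inv]; exact h2'
      rwa [h] at this
  -- color preservation for y
  have step_y : ∀ u : G, σ (y * u) = y * σ u := by
    intro u
    have h1 : (y * u) * u⁻¹ ∈ S := by
      rw [mul_inv_cancel_right]; exact Set.mem_insert_of_mem x rfl
    have h1' : σ (y * u) * (σ u)⁻¹ ∈ S := (hσ u (y * u)).mp h1
    rcases h1' with h | h
    · exfalso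
      have h2' : σ u * (σ (y * u))⁻¹ ∈ S := by
        have : (σ (y * u) * (σ u)⁻¹)⁻¹ ∈ S := by
          rw [h, hxinv]; exact Set.mem_insert x {y}
        rwa [mul_inv_rev, inv_inv] at this
      have h3 : u * (y * u)⁻¹ ∈ S := (hσ (y * u) u).mpr h2'
      rw [mul_inv_rev, ← mul_assoc, mul_inv_cancel, one_mul] at h3
      exact hyS h3
    · rw [Set.mem_singleton_iff, mul_inv_eq_iff_eq_mul] at h; exact h
  -- every h commutes with σ on the left
  have key : ∀ h : G, ∀ u : G, σ (h * u) = h * σ u := by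
    intro h
    have hmem : h ∈ Subgroup.closure ({x, y} : Set G) := by
      rw [hgen]; trivial
    induction hmem using Subgroup.closure_induction with
    | mem g hg =>
      rcases hg with hg | hg
      · subst hg; exact step_x
      · subst hg; exact step_y
    | one => intro u; simp
    | mul a b _ _ ha hb => intro u; rw [mul_assoc, ha, hb, mul_assoc]
    | inv a _ ha =>
      intro u
      have := ha (a⁻¹ * u)
      rw [← mul_assoc, mul_inv_cancel, one_mul] at this
      rw [this, ← mul_assoc, inv_mul_cancel, one_mul]
  refine ⟨σ 1, fun u => ?_⟩
  have := key u 1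
  rwa [mul_one] at this
end

section
/- Let G be a group and let x, y ∈ G be such that x has order 4, y has order at least 5, the order of x·y is at least 3, and it is not the case that y has order 12 with x = y⁹. Then for any s₁, s₂, s₃, s₄ ∈ {x, y}, if s₁·s₂·s₃·s₄ = 1 then s₁ = s₂ = s₃ = s₄ = x. -/
theorem stmt_13 (G : Type*) [Group G] (x y : G)
    (hx : orderOf x = 4) (hy : 5 ≤ orderOf y) (hxy : 3 ≤ orderOf (x * y))
    (hexc : ¬ (orderOf y = 12 ∧ x = y ^ 9)) :
    ∀ s₁ s₂ s₃ s₄ : G, s₁ ∈ ({x, y} : Set G) → s₂ ∈ ({x, y} : Set G) →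
      s₃ ∈ ({x, y} : Set G) → s₄ ∈ ({x, y} : Set G) → s₁ * s₂ * s₃ * s₄ = 1 →
      s₁ = x ∧ s₂ = x ∧ s₃ = x ∧ s₄ = x := by
  have hx4 : x ^ 4 = 1 := by rw [← hx]; exact pow_orderOf_eq_one x
  have hy4 : ¬ (y ^ 4 = 1) := by
    intro h
    have := Nat.le_of_dvd (by norm_num) (orderOf_dvd_of_pow_eq_one h)
    omega
  -- case "x = y⁻³"
  have hB : ¬ (x * y ^ 3 = 1) := by
    intro h
    have hxi : x = (y ^ 3)⁻¹ := eq_inv_of_mul_eq_one_left h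
    have h4 : orderOf y / Nat.gcd (orderOf y) 3 = 4 := by
      rw [← orderOf_pow' (x := y) (by norm_num : (3:ℕ) ≠ 0), ← orderOf_inv, ← hxi, hx]
    have hg1 : Nat.gcd (orderOf y) 3 ∣ orderOf y := Nat.gcd_dvd_left _ _
    have hg3 : Nat.gcd (orderOf y) 3 ∣ 3 := Nat.gcd_dvd_right _ _
    have hcases : Nat.gcd (orderOf y) 3 = 1 ∨ Nat.gcd (orderOf y) 3 = 3 :=
      Nat.Prime.eq_one_or_self_of_dvd (by norm_num) _ hg3
    have hn := Nat.mul_div_cancel' hg1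
    rw [h4] at hn
    rcases hcases with hc | hc
    · omega
    · have hny : orderOf y = 12 := by omega
      have h12 : y ^ 12 = 1 := by rw [← hny]; exact pow_orderOf_eq_one y
      have h9 : y ^ 9 * y ^ 3 = 1 := by rw [← pow_add]; exact h12
      exact hexc ⟨hny, by rw [hxi, ← eq_inv_of_mul_eq_one_left h9]⟩
  -- case "y = x⁻³"
  have hC : ¬ (y * x ^ 3 = 1) := by
    intro h
    have hyi : y = (x ^ 3)⁻¹ := eq_inv_of_mul_eq_one_left h
    have : orderOf y = 4 := by
      rw [hyi, orderOf_inv, orderOf_pow' (x := x) (by norm_num : (3:ℕ) ≠ 0), hx]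
      norm_num
    omega
  -- case "y² = x⁻²"
  have key : ¬ (y * y * (x * x) = 1) := by
    intro h
    have h2 : y * y = (x * x)⁻¹ := eq_inv_of_mul_eq_one_left h
    apply hy4
    have e1 : y ^ 4 = (y * y) * (y * y) := by
      rw [pow_succ, pow_succ, pow_succ, pow_one]; simp [pow_succ, mul_assoc, mul_inv_rev]
    rw [e1, h2]
    have e2 : (x * x)⁻¹ * (x * x)⁻¹ = (x ^ 4)⁻¹ := by simp [pow_succ, mul_assoc, mul_inv_rev]
    rw [e2, hx4, inv_one]
  -- case "(xy)² = 1"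
  have hD : ¬ ((x * y) ^ 2 = 1) := by
    intro h
    have := Nat.le_of_dvd (by norm_num) (orderOf_dvd_of_pow_eq_one h)
    omega
  intro s₁ s₂ s₃ s₄ h1 h2 h3 h4 heq
  simp only [Set.mem_insert_iff, Set.mem_singleton_iff] at h1 h2 h3 h4
  rcases h1 with h1 | h1 <;> rcases h2 with h2 | h2 <;>
    rcases h3 with h3 | h3 <;> rcases h4 with h4 | h4 <;>
    rw [h1, h2, h3, h4] at heq
  -- xxxx
  · exact ⟨h1, h2, h3, h4⟩
  -- xxxy
  · exfalso; apply hC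
    have h' : y * x ^ 3 = x⁻¹ * x⁻¹ * x⁻¹ * (x * x * x * y) * x * x * x := by simp [pow_succ, mul_assoc, mul_inv_rev]
    rw [heq] at h'; rw [h']; simp [pow_succ, mul_assoc, mul_inv_rev]
  -- xxyx
  · exfalso; apply hC
    have h' : y * x ^ 3 = x⁻¹ * x⁻¹ * (x * x * y * x) * x * x := by simp [pow_succ, mul_assoc, mul_inv_rev]
    rw [heq] at h'; rw [h']; simp [pow_succ, mul_assoc, mul_inv_rev]
  -- xxyy
  · exfalso; apply key
    have h' : y * y * (x * x) = x⁻¹ * x⁻¹ * (x * x * y * y) * x * x := by simp [pow_succ, mul_assoc, mul_inv_rev]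
    rw [heq] at h'; rw [h']; simp [pow_succ, mul_assoc, mul_inv_rev]
  -- xyxx
  · exfalso; apply hC
    have h' : y * x ^ 3 = x⁻¹ * (x * y * x * x) * x := by simp [pow_succ, mul_assoc, mul_inv_rev]
    rw [heq] at h'; rw [h']; simp [pow_succ, mul_assoc, mul_inv_rev]
  -- xyxy
  · exfalso; apply hD
    have h' : (x * y) ^ 2 = x * y * x * y := by simp [pow_succ, mul_assoc, mul_inv_rev]
    rw [heq] at h'; exact h'
  -- xyyx
  · exfalso; apply key
    have h' : y * y * (x * x) = x⁻¹ * (x * y * y * x) * x := by simp [pow_succ, mul_assoc, mul_inv_rev]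
    rw [heq] at h'; rw [h']; simp [pow_succ, mul_assoc, mul_inv_rev]
  -- xyyy
  · exfalso; apply hB
    have h' : x * y ^ 3 = x * y * y * y := by simp [pow_succ, mul_assoc, mul_inv_rev]
    rw [heq] at h'; exact h'
  -- yxxx
  · exfalso; apply hC
    have h' : y * x ^ 3 = y * x * x * x := by simp [pow_succ, mul_assoc, mul_inv_rev]
    rw [heq] at h'; exact h'
  -- yxxy
  · exfalso; apply key
    have h' : y * y * (x * x) = y * (y * x * x * y) * y⁻¹ := by simp [pow_succ, mul_assoc, mul_inv_rev]
    rw [heq] at h'; rw [h']; simp [pow_succ, mul_assoc, mul_inv_rev]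
  -- yxyx
  · exfalso; apply hD
    have h2 : x * y * x * y = 1 := by
      have := congrArg (fun g => x * g * x⁻¹) heq
      simpa [mul_assoc] using this
    have h' : (x * y) ^ 2 = x * y * x * y := by simp [pow_succ, mul_assoc]
    rw [h2] at h'; exact h'
  -- yxyy
  · exfalso; apply hB
    have h' : x * y ^ 3 = y⁻¹ * (y * x * y * y) * y := by simp [pow_succ, mul_assoc, mul_inv_rev]
    rw [heq] at h'; rw [h']; simp [pow_succ, mul_assoc, mul_inv_rev]
  -- yyxx
  · exfalso; apply key
    have h' : y * y * (x * x) = y * y * x * x := by simp [pow_succ, mul_assoc, mul_inv_rev]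
    rw [heq] at h'; exact h'
  -- yyxy
  · exfalso; apply hB
    have h' : x * y ^ 3 = y⁻¹ * y⁻¹ * (y * y * x * y) * y * y := by simp [pow_succ, mul_assoc, mul_inv_rev]
    rw [heq] at h'; rw [h']; simp [pow_succ, mul_assoc, mul_inv_rev]
  -- yyyx
  · exfalso; apply hB
    have h' : x * y ^ 3 = y⁻¹ * y⁻¹ * y⁻¹ * (y * y * y * x) * y * y * y := by simp [pow_succ, mul_assoc, mul_inv_rev]
    rw [heq] at h'; rw [h']; simp [pow_succ, mul_assoc, mul_inv_rev]
  -- yyyy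
  · exfalso; apply hy4
    have h' : y ^ 4 = y * y * y * y := by simp [pow_succ, mul_assoc, mul_inv_rev]
    rw [heq] at h'; exact h'
end
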